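/- Let K ⊆ ℝ^d be a convex body contained in a ball of radius 1/2 centered at the origin, and let 0 < ε ≤ 1. Let S be the sphere of radius 3 centered at the origin (the Dudley sphere). Let z, x ∈ S with ‖z − x‖ ≤ √ε/4, and let z₀ = proj_K(z) and x₀ = proj_K(x) be their nearest points on K. Then: (i) ‖z₀ − x₀‖ ≤ √ε/4, and (ii) the supporting hyperplane of K at x₀ with normal direction (x − x₀) intersects the segment from z to z₀ at a point whose distance from z₀ is less than ε. -/

import Mathlib

open RealInnerProductSpace

set_option maxHeartbeats 1000000 in
theorem stmt_15 (d : ℕ) (K : Set (EuclideanSpace ℝ (Fin d)))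
    (hconv : Convex ℝ K) (hcomp : IsCompact K) (hint : (interior K).Nonempty)
    (hK : K ⊆ Metric.closedBall (0 : EuclideanSpace ℝ (Fin d)) (1 / 2))
    (ε : ℝ) (hε0 : 0 < ε) (hε1 : ε ≤ 1)
    (z x : EuclideanSpace ℝ (Fin d))
    (hz : z ∈ Metric.sphere (0 : EuclideanSpace ℝ (Fin d)) 3)
    (hx : x ∈ Metric.sphere (0 : EuclideanSpace ℝ (Fin d)) 3)
    (hzx : ‖z - x‖ ≤ Real.sqrt ε / 4)
    (z₀ x₀ : EuclideanSpace ℝ (Fin d))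
    (hz₀K : z₀ ∈ K) (hz₀min : ∀ y ∈ K, dist z z₀ ≤ dist z y)
    (hx₀K : x₀ ∈ K) (hx₀min : ∀ y ∈ K, dist x x₀ ≤ dist x y) :
    ‖z₀ - x₀‖ ≤ Real.sqrt ε / 4 ∧
      ∃ w ∈ segment ℝ z z₀, ⟪w - x₀, x - x₀⟫ = 0 ∧ dist w z₀ < ε := by
  -- variational characterization of the projection
  have key : ∀ (u v : EuclideanSpace ℝ (Fin d)), v ∈ K →
      (∀ y ∈ K, dist u v ≤ dist u y) →
      ∀ w ∈ K, ⟪u - v, w - v⟫ ≤ 0 := by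
    intro u v hv hmin w hw
    by_contra hp
    push_neg at hp
    set p : ℝ := ⟪u - v, w - v⟫ with hp_def
    have hq0 : 0 < ‖w - v‖ := by
      rcases (norm_nonneg (w - v)).eq_or_lt' with h | h
      · exfalso
        have : (w - v : EuclideanSpace ℝ (Fin d)) = 0 := by
          rw [← norm_eq_zero]; exact h
        rw [hp_def, this, inner_zero_right] at hp
        exact lt_irrefl 0 hp
      · exact h
    set q : ℝ := ‖w - v‖ ^ 2 with hq_def
    have hqpos : 0 < q := by positivity
    set θ : ℝ := min 1 (p / q) with hθ_def
    have hθ0 : 0 < θ := lt_min one_pos (div_pos hp hqpos)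
    have hθ1 : θ ≤ 1 := min_le_left _ _
    have hθq : θ * q ≤ p := by
      have h1 : θ ≤ p / q := min_le_right _ _
      calc θ * q ≤ (p / q) * q := by nlinarith
        _ = p := by field_simp
    have hmem : (1 - θ) • v + θ • w ∈ K := hconv hv hw (by linarith) hθ0.le (by ring)
    have hd := hmin _ hmem
    rw [dist_eq_norm, dist_eq_norm] at hd
    have hrw : u - ((1 - θ) • v + θ • w) = (u - v) - θ • (w - v) := by module
    rw [hrw] at hd
    have hsq2 : ‖(u - v) - θ • (w - v)‖ ^ 2
        = ‖u - v‖ ^ 2 - 2 * (θ * p) + θ ^ 2 * q := by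
      rw [norm_sub_sq_real, real_inner_smul_right, norm_smul, Real.norm_eq_abs,
        abs_of_nonneg hθ0.le, hq_def]
      ring
    have hd2 : ‖u - v‖ ^ 2 ≤ ‖(u - v) - θ • (w - v)‖ ^ 2 := by
      have := norm_nonneg (u - v)
      nlinarith
    rw [hsq2] at hd2
    nlinarith
  have hsupz : ∀ w ∈ K, ⟪z - z₀, w - z₀⟫ ≤ 0 := key z z₀ hz₀K hz₀min
  have hsupx : ∀ w ∈ K, ⟪x - x₀, w - x₀⟫ ≤ 0 := key x x₀ hx₀K hx₀min
  have hsq : Real.sqrt ε * Real.sqrt ε = ε := Real.mul_self_sqrt hε0.le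
  have hs0 : 0 ≤ Real.sqrt ε := Real.sqrt_nonneg ε
  have hs1 : Real.sqrt ε ≤ 1 := Real.sqrt_le_one.mpr hε1
  -- norm bounds
  have hzn : ‖z‖ = 3 := by simpa using hz
  have hz₀n : ‖z₀‖ ≤ 1 / 2 := by simpa using hK hz₀K
  have hx₀n : ‖x₀‖ ≤ 1 / 2 := by simpa using hK hx₀K
  have hzz₀_lb : 5 / 2 ≤ ‖z - z₀‖ := by
    have := norm_sub_norm_le z z₀
    linarith [this, abs_le.mp (abs_norm_sub_norm_le z z₀)]
  have hzz₀_ub : ‖z - z₀‖ ≤ 7 / 2 := by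
    have := norm_sub_le z z₀
    linarith
  -- Part (i): projection is 1-Lipschitz
  have h1 : ⟪z - z₀, x₀ - z₀⟫ ≤ 0 := hsupz x₀ hx₀K
  have h2 : ⟪x - x₀, z₀ - x₀⟫ ≤ 0 := hsupx z₀ hz₀K
  have hlip : ‖z₀ - x₀‖ ≤ ‖z - x‖ := by
    have e1 : ⟪z - x, z₀ - x₀⟫ =
        ⟪z - z₀, z₀ - x₀⟫ + ⟪z₀ - x₀, z₀ - x₀⟫ - ⟪x - x₀, z₀ - x₀⟫ := by
      rw [show (z - x : EuclideanSpace ℝ (Fin d))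
          = (z - z₀) + (z₀ - x₀) - (x - x₀) by module,
        inner_sub_left, inner_add_left]
    have e2 : ⟪z - z₀, z₀ - x₀⟫ = - ⟪z - z₀, x₀ - z₀⟫ := by
      rw [show (z₀ - x₀ : EuclideanSpace ℝ (Fin d)) = -(x₀ - z₀) by module,
        inner_neg_right]
    have hns : ⟪z₀ - x₀, z₀ - x₀⟫ = ‖z₀ - x₀‖ * ‖z₀ - x₀‖ :=
      real_inner_self_eq_norm_mul_norm _
    have hub := real_inner_le_norm (z - x) (z₀ - x₀)
    have hsq' : ‖z₀ - x₀‖ * ‖z₀ - x₀‖ ≤ ‖z - x‖ * ‖z₀ - x₀‖ := by linarith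
    rcases (norm_nonneg (z₀ - x₀)).eq_or_lt' with h | h
    · rw [h]; positivity
    · exact le_of_mul_le_mul_right hsq' h
  have parti : ‖z₀ - x₀‖ ≤ Real.sqrt ε / 4 := hlip.trans hzx
  refine ⟨parti, ?_⟩
  -- Part (ii)
  set a : ℝ := ⟪z₀ - x₀, x - x₀⟫ with ha_def
  set b : ℝ := ⟪z - z₀, x - x₀⟫ with hb_def
  have ha0 : a ≤ 0 := by
    have := hsupx z₀ hz₀K
    rwa [real_inner_comm] at this
  -- lower bound on b
  have hb5 : 5 ≤ b := by
    have hdec : b = ⟪z - z₀, z - z₀⟫ + ⟪z - z₀, (x - x₀) - (z - z₀)⟫ := by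
      rw [hb_def, ← inner_add_right]
      congr 1
      module
    have hn1 : ‖(x - x₀) - (z - z₀)‖ ≤ 1 / 2 := by
      have : ((x - x₀) - (z - z₀) : EuclideanSpace ℝ (Fin d))
          = (x - z) - (x₀ - z₀) := by module
      rw [this]
      have h3 : ‖x - z‖ ≤ Real.sqrt ε / 4 := by rwa [norm_sub_rev]
      have h4 : ‖x₀ - z₀‖ ≤ Real.sqrt ε / 4 := by rwa [norm_sub_rev]
      calc ‖(x - z) - (x₀ - z₀)‖ ≤ ‖x - z‖ + ‖x₀ - z₀‖ := norm_sub_le _ _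
        _ ≤ Real.sqrt ε / 4 + Real.sqrt ε / 4 := by linarith
        _ ≤ 1 / 2 := by linarith
    have hinner : - (‖z - z₀‖ * ‖(x - x₀) - (z - z₀)‖) ≤
        ⟪z - z₀, (x - x₀) - (z - z₀)⟫ := by
      have := abs_real_inner_le_norm (z - z₀) ((x - x₀) - (z - z₀))
      have := neg_abs_le (⟪z - z₀, (x - x₀) - (z - z₀)⟫ : ℝ)
      linarith
    have hns : ⟪z - z₀, z - z₀⟫ = ‖z - z₀‖ * ‖z - z₀‖ :=
      real_inner_self_eq_norm_mul_norm _
    nlinarith [hzz₀_lb, norm_nonneg (z - z₀)]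
  have hbpos : (0:ℝ) < b := by linarith
  -- upper bound on -a
  have haub : -a ≤ ε / 16 := by
    have hdec : -a = ⟪x₀ - z₀, x - z⟫ + ⟪z - z₀, x₀ - z₀⟫
        + (- (‖x₀ - z₀‖ * ‖x₀ - z₀‖)) := by
      have h5 : (-a : ℝ) = ⟪x₀ - z₀, x - x₀⟫ := by
        rw [ha_def, show (x₀ - z₀ : EuclideanSpace ℝ (Fin d)) = -(z₀ - x₀) by module,
          inner_neg_left]
      have h6 : (x - x₀ : EuclideanSpace ℝ (Fin d))
          = (x - z) + (z - z₀) + (z₀ - x₀) := by module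
      rw [h5, h6, inner_add_right, inner_add_right]
      have h7 : ⟪x₀ - z₀, z - z₀⟫ = ⟪z - z₀, x₀ - z₀⟫ := real_inner_comm _ _
      have h8 : ⟪x₀ - z₀, z₀ - x₀⟫ = - (‖x₀ - z₀‖ * ‖x₀ - z₀‖) := by
        rw [show (z₀ - x₀ : EuclideanSpace ℝ (Fin d)) = -(x₀ - z₀) by module,
          inner_neg_right, real_inner_self_eq_norm_mul_norm]
      rw [h7, h8]
    have h9 : ⟪x₀ - z₀, x - z⟫ ≤ ε / 16 := by
      have h10 := real_inner_le_norm (x₀ - z₀) (x - z)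
      have h11 : ‖x₀ - z₀‖ ≤ Real.sqrt ε / 4 := by rwa [norm_sub_rev]
      have h12 : ‖x - z‖ ≤ Real.sqrt ε / 4 := by rwa [norm_sub_rev]
      have h13 : ‖x₀ - z₀‖ * ‖x - z‖ ≤ (Real.sqrt ε / 4) * (Real.sqrt ε / 4) :=
        mul_le_mul h11 h12 (norm_nonneg _) (by positivity)
      nlinarith [h10, h13, hsq]
    have h15 : ⟪z - z₀, x₀ - z₀⟫ ≤ 0 := h1
    nlinarith [norm_nonneg (x₀ - z₀), sq_nonneg (‖x₀ - z₀‖)]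
  -- construct the intersection point
  set t : ℝ := (-a) / b with ht_def
  have ht0 : 0 ≤ t := div_nonneg (by linarith) hbpos.le
  have ht1 : t ≤ 1 := (div_le_one hbpos).mpr (by linarith)
  set w : EuclideanSpace ℝ (Fin d) := z₀ + t • (z - z₀) with hw_def
  refine ⟨w, ⟨t, 1 - t, ht0, by linarith, by ring, by rw [hw_def]; module⟩, ?_, ?_⟩
  · have hwx : (w - x₀ : EuclideanSpace ℝ (Fin d))
        = (z₀ - x₀) + t • (z - z₀) := by rw [hw_def]; module
    rw [hwx, inner_add_left, real_inner_smul_left, ← ha_def, ← hb_def, ht_def]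
    field_simp
    ring
  · have hwz : (w - z₀ : EuclideanSpace ℝ (Fin d)) = t • (z - z₀) := by
      rw [hw_def]; module
    rw [dist_eq_norm, hwz, norm_smul, Real.norm_eq_abs, abs_of_nonneg ht0]
    have hT : t ≤ ε / 80 := by
      rw [ht_def, div_le_iff₀ hbpos]
      nlinarith
    calc t * ‖z - z₀‖ ≤ (ε / 80) * (7 / 2) :=
          mul_le_mul hT hzz₀_ub (norm_nonneg _) (by positivity)
      _ < ε := by linarith
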